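/- For every 2-uniform hypergraph H, the following are equivalent: (1) H is dually conformal; (2) there exists a finite simple graph G with vertex set V(H), with τ_c^+(G) = 2 and without universal vertices, such that the hyperedges of H are exactly the minimal clique transversals of G. -/

import Mathlib

open Finset
open scoped Classical

variable {V : Type*} [Fintype V] [DecidableEq V]

/-- A hypergraph on vertex set `V` is given by its finite set of hyperedges `E`;
the condition that every vertex belongs to at least one hyperedge. -/
def Covers (E : Finset (Finset V)) : Prop := ∀ v : V, ∃ e ∈ E, v ∈ e

/-- A hypergraph is Sperner if no hyperedge is contained in another hyperedge. -/
def SpernerHG (E : Finset (Finset V)) : Prop := ∀ e ∈ E, ∀ f ∈ E, e ⊆ f → e = f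

/-- A transversal of a hypergraph: a set of vertices intersecting all hyperedges. -/
def IsTransversal (E : Finset (Finset V)) (T : Finset V) : Prop := ∀ e ∈ E, (e ∩ T).Nonempty

/-- A minimal transversal: a transversal not properly containing another transversal. -/
def IsMinTransversal (E : Finset (Finset V)) (T : Finset V) : Prop :=
  IsTransversal E T ∧ ∀ T' ⊆ T, IsTransversal E T' → T' = T

/-- The dual hypergraph: its hyperedges are exactly the minimal transversals. -/
noncomputable def dualHG (E : Finset (Finset V)) : Finset (Finset V) :=
  Finset.univ.filter fun T => IsMinTransversal E T

/-- The co-occurrence graph of a hypergraph: two distinct vertices are adjacent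
iff some hyperedge contains both. -/
def coocGraph (E : Finset (Finset V)) : SimpleGraph V where
  Adj u v := u ≠ v ∧ ∃ e ∈ E, u ∈ e ∧ v ∈ e
  symm := by
    constructor
    rintro u v ⟨huv, e, he, hu, hv⟩
    exact ⟨Ne.symm huv, e, he, hv, hu⟩
  loopless := by
    constructor
    rintro v ⟨hv, -⟩
    exact hv rfl

/-- A maximal clique of a graph: a clique not properly contained in any other clique. -/
def IsMaxClique (G : SimpleGraph V) (C : Finset V) : Prop :=
  G.IsClique (C : Set V) ∧ ∀ D : Finset V, G.IsClique (D : Set V) → C ⊆ D → D = C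

/-- A hypergraph is conformal if every maximal clique of its co-occurrence graph
is a hyperedge. -/
def ConformalHG (E : Finset (Finset V)) : Prop :=
  ∀ C : Finset V, IsMaxClique (coocGraph E) C → C ∈ E

/-- A hypergraph is dually conformal if its dual hypergraph is conformal. -/
def DuallyConformalHG (E : Finset (Finset V)) : Prop :=
  ConformalHG (dualHG E)

/-- A clique transversal of a graph: a set of vertices meeting all maximal cliques. -/
def IsCliqueTransversal (G : SimpleGraph V) (X : Finset V) : Prop :=
  ∀ C : Finset V, IsMaxClique G C → (C ∩ X).Nonempty

/-- A minimal clique transversal: a clique transversal not properly containing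
another clique transversal. -/
def IsMinCliqueTransversal (G : SimpleGraph V) (X : Finset V) : Prop :=
  IsCliqueTransversal G X ∧ ∀ Y ⊆ X, IsCliqueTransversal G Y → Y = X

/-- The upper clique transversal number: the maximum size of a minimal clique
transversal. -/
noncomputable def uct (G : SimpleGraph V) : ℕ :=
  (Finset.univ.filter fun X : Finset V => IsMinCliqueTransversal G X).sup Finset.card

set_option linter.unusedSectionVars false

/- ============ auxiliary lemmas ============ -/

lemma mem_dualHG {E : Finset (Finset V)} {T : Finset V} :
    T ∈ dualHG E ↔ IsMinTransversal E T := by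
  simp [dualHG]

lemma exists_minTransversal_subset (E : Finset (Finset V)) (T : Finset V)
    (hT : IsTransversal E T) : ∃ T' ⊆ T, IsMinTransversal E T' := by
  induction T using Finset.strongInductionOn with
  | _ T ih =>
    by_cases h : ∀ T' ⊆ T, IsTransversal E T' → T' = T
    · exact ⟨T, subset_rfl, hT, h⟩
    · push_neg at h
      obtain ⟨S, hsub, htr, hne⟩ := h
      obtain ⟨T', h1, h2⟩ := ih S (ssubset_of_subset_of_ne hsub hne) htr
      exact ⟨T', h1.trans hsub, h2⟩

/-- each hyperedge is a transversal of the dual hypergraph -/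
lemma edge_transversal_dual {E : Finset (Finset V)} {e : Finset V} (he : e ∈ E) :
    IsTransversal (dualHG E) e := by
  intro T hT
  rw [mem_dualHG] at hT
  rw [inter_comm]
  exact hT.1 e he

/-- dual of dual is the original hypergraph (Sperner case) -/
lemma dual_dual (E : Finset (Finset V)) (hsp : SpernerHG E) (T : Finset V) :
    IsMinTransversal (dualHG E) T ↔ T ∈ E := by
  constructor
  · rintro ⟨htr, hmin⟩
    -- find e ∈ E with e ⊆ T
    have hex : ∃ e ∈ E, e ⊆ T := by
      by_contra hno
      push_neg at hno
      have hcomp : IsTransversal E (univ \ T) := by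
        intro e heE
        obtain ⟨x, hx, hxT⟩ := Finset.not_subset.mp (hno e heE)
        exact ⟨x, mem_inter.mpr ⟨hx, mem_sdiff.mpr ⟨mem_univ x, hxT⟩⟩⟩
      obtain ⟨T', hT'sub, hT'min⟩ := exists_minTransversal_subset E _ hcomp
      have := htr T' (mem_dualHG.mpr hT'min)
      obtain ⟨x, hx⟩ := this
      rw [mem_inter] at hx
      have := hT'sub hx.1
      rw [mem_sdiff] at this
      exact this.2 hx.2
    obtain ⟨e, heE, hesub⟩ := hex
    have := hmin e hesub (edge_transversal_dual heE)
    rwa [← this]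
  · intro heE
    refine ⟨edge_transversal_dual heE, ?_⟩
    intro S hS htrS
    by_contra hneq
    obtain ⟨x, hxT, hxS⟩ := Finset.not_subset.mp
      (fun h => hneq (Finset.Subset.antisymm hS h))
    -- build a transversal of E avoiding T except at x
    set T0 : Finset V := insert x (E.sup fun f => f \ T) with hT0
    have hT0tr : IsTransversal E T0 := by
      intro f hfE
      by_cases hfT : f ⊆ T
      · have : f = T := hsp f hfE T heE hfT
        exact ⟨x, mem_inter.mpr ⟨this ▸ hxT, mem_insert_self x _⟩⟩
      · obtain ⟨y, hyf, hyT⟩ := Finset.not_subset.mp hfT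
        refine ⟨y, mem_inter.mpr ⟨hyf, mem_insert_of_mem ?_⟩⟩
        have hls : f \ T ≤ E.sup (fun g => g \ T) := Finset.le_sup (f := fun g => g \ T) hfE
        exact hls (mem_sdiff.mpr ⟨hyf, hyT⟩)
    obtain ⟨T', hT'sub, hT'min⟩ := exists_minTransversal_subset E _ hT0tr
    obtain ⟨y, hy⟩ := htrS T' (mem_dualHG.mpr hT'min)
    rw [mem_inter] at hy
    have hyT0 : y ∈ T0 := hT'sub hy.1
    have hyT : y ∈ T := hS hy.2
    rw [hT0, mem_insert] at hyT0
    rcases hyT0 with rfl | hmem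
    · exact hxS hy.2
    · rw [Finset.mem_sup] at hmem
      obtain ⟨f, -, hyf⟩ := hmem
      exact (mem_sdiff.mp hyf).2 hyT

lemma exists_maxClique_supset (G : SimpleGraph V) (C : Finset V)
    (hC : G.IsClique (C : Set V)) : ∃ D, C ⊆ D ∧ IsMaxClique G D := by
  obtain ⟨D, hD, hmax⟩ := Finset.exists_max_image
      (univ.filter fun D : Finset V => G.IsClique (D : Set V) ∧ C ⊆ D) Finset.card
      ⟨C, by simp [hC]⟩
  simp only [mem_filter, mem_univ, true_and] at hD hmax
  refine ⟨D, hD.2, hD.1, fun D' hD' hsub => ?_⟩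
  have hle := hmax D' ⟨hD', hD.2.trans hsub⟩
  exact (Finset.eq_of_subset_of_card_le hsub hle).symm

noncomputable def maxCliques (G : SimpleGraph V) : Finset (Finset V) :=
  univ.filter fun C => IsMaxClique G C

lemma mem_maxCliques {G : SimpleGraph V} {C : Finset V} :
    C ∈ maxCliques G ↔ IsMaxClique G C := by simp [maxCliques]

lemma maxCliques_sperner (G : SimpleGraph V) : SpernerHG (maxCliques G) := by
  intro e he f hf hef
  rw [mem_maxCliques] at he hf
  exact (he.2 f hf.1 hef).symm

lemma cliqueTransversal_iff {G : SimpleGraph V} {X : Finset V} :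
    IsCliqueTransversal G X ↔ IsTransversal (maxCliques G) X := by
  constructor
  · intro h C hC; exact h C (mem_maxCliques.mp hC)
  · intro h C hC; exact h C (mem_maxCliques.mpr hC)

lemma minCliqueTransversal_iff {G : SimpleGraph V} {X : Finset V} :
    IsMinCliqueTransversal G X ↔ IsMinTransversal (maxCliques G) X := by
  unfold IsMinCliqueTransversal IsMinTransversal
  simp only [cliqueTransversal_iff]

lemma cooc_maxCliques (G : SimpleGraph V) : coocGraph (maxCliques G) = G := by
  ext u v
  constructor
  · rintro ⟨hne, C, hC, hu, hv⟩
    exact (mem_maxCliques.mp hC).1 hu hv hne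
  · intro hadj
    obtain ⟨D, hsub, hD⟩ := exists_maxClique_supset G {u, v}
      (by rw [coe_pair]; exact SimpleGraph.isClique_pair.mpr fun _ => hadj)
    exact ⟨hadj.ne, D, mem_maxCliques.mpr hD,
      hsub (mem_insert_self u _), hsub (mem_insert_of_mem (mem_singleton_self v))⟩

/-- A 2-uniform hypergraph `H` is dually conformal iff there is a graph
`G` on `V(H)` with `τ_c^+(G) = 2` and no universal vertices whose minimal clique
transversals are exactly the hyperedges of `H`. -/
theorem two_uniform_dually_conformal_iff [Nonempty V] (E : Finset (Finset V))
    (hcov : Covers E) (h2 : ∀ e ∈ E, e.card = 2) :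
    DuallyConformalHG E ↔
      ∃ G : SimpleGraph V, uct G = 2 ∧ (∀ v : V, ∃ u : V, u ≠ v ∧ ¬ G.Adj v u) ∧
        ∀ X : Finset V, X ∈ E ↔ IsMinCliqueTransversal G X := by
  have hsp : SpernerHG E := by
    intro e he f hf hef
    exact Finset.eq_of_subset_of_card_le hef (by rw [h2 e he, h2 f hf])
  have hEne : E.Nonempty := by
    obtain ⟨v⟩ := ‹Nonempty V›
    obtain ⟨e, heE, -⟩ := hcov v
    exact ⟨e, heE⟩
  constructor
  · intro hdc
    set G := coocGraph (dualHG E) with hG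
    -- maximal cliques of G = dualHG E
    have hmc : ∀ C : Finset V, IsMaxClique G C ↔ C ∈ dualHG E := by
      intro C
      constructor
      · exact fun h => hdc C h
      · intro hC
        have hclique : G.IsClique (C : Set V) := by
          intro u hu v hv hne
          exact ⟨hne, C, hC, hu, hv⟩
        obtain ⟨D, hsub, hD⟩ := exists_maxClique_supset G C hclique
        have hDE : D ∈ dualHG E := hdc D hD
        -- dualHG E is Sperner
        rw [mem_dualHG] at hC hDE
        have : C = D := hDE.2 C hsub hC.1
        rw [this] at hC ⊢
        exact hD
    -- min clique transversals of G = E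
    have hmct : ∀ X : Finset V, X ∈ E ↔ IsMinCliqueTransversal G X := by
      intro X
      rw [minCliqueTransversal_iff]
      have hsame : maxCliques G = dualHG E := by
        apply Finset.ext
        intro C
        rw [mem_maxCliques, hmc]
      rw [hsame, dual_dual E hsp]
    refine ⟨G, ?_, ?_, hmct⟩
    · -- uct G = 2
      apply le_antisymm
      · apply Finset.sup_le
        intro X hX
        rw [mem_filter] at hX
        rw [← hmct] at hX
        exact le_of_eq (h2 X hX.2)
      · obtain ⟨e, heE⟩ := hEne
        have : e ∈ univ.filter fun X : Finset V => IsMinCliqueTransversal G X := by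
          rw [mem_filter]
          exact ⟨mem_univ e, (hmct e).mp heE⟩
        calc 2 = e.card := (h2 e heE).symm
        _ ≤ _ := Finset.le_sup this
    · -- no universal vertex
      intro v
      by_contra hno
      push_neg at hno
      -- every maximal clique of G contains v
      have hvuniv : ∀ u : V, u ≠ v → G.Adj v u := fun u hu => hno u hu
      -- there is a minimal transversal avoiding v
      have htr : IsTransversal E (univ.erase v) := by
        intro e heE
        have hcard := h2 e heE
        have : ∃ u ∈ e, u ≠ v := by
          by_contra hc
          push_neg at hc
          have : e ⊆ {v} := fun u hu => mem_singleton.mpr (hc u hu)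
          have := Finset.card_le_card this
          simp [hcard] at this
        obtain ⟨u, hue, huv⟩ := this
        exact ⟨u, mem_inter.mpr ⟨hue, mem_erase.mpr ⟨huv, mem_univ u⟩⟩⟩
      obtain ⟨T, hTsub, hTmin⟩ := exists_minTransversal_subset E _ htr
      have hTd : T ∈ dualHG E := mem_dualHG.mpr hTmin
      have hTmc : IsMaxClique G T := (hmc T).mpr hTd
      have hTne : ∀ b ∈ T, b ≠ v := fun b hb => (mem_erase.mp (hTsub hb)).1
      -- v can be added to the clique T
      have hclique : G.IsClique ((insert v T : Finset V) : Set V) := by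
        intro a ha b hb hab
        rw [coe_insert, Set.mem_insert_iff] at ha hb
        rcases ha with rfl | ha
        · rcases hb with rfl | hb
          · exact absurd rfl hab
          · exact hvuniv b (hTne b hb)
        · rcases hb with rfl | hb
          · exact (hvuniv a (hTne a ha)).symm
          · exact hTmc.1 ha hb hab
      have heq := hTmc.2 (insert v T) hclique (subset_insert v T)
      have hvT : v ∈ T := heq ▸ mem_insert_self v T
      exact hTne v hvT rfl
  · rintro ⟨G, -, -, hmct⟩
    -- E = dualHG (maxCliques G)
    have hE : E = dualHG (maxCliques G) := by
      apply Finset.ext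
      intro X
      rw [mem_dualHG, ← minCliqueTransversal_iff, hmct]
    have hdd : dualHG (dualHG (maxCliques G)) = maxCliques G := by
      apply Finset.ext
      intro T
      rw [mem_dualHG, dual_dual (maxCliques G) (maxCliques_sperner G)]
    intro C hC
    rw [hE] at hC ⊢
    rw [hdd] at hC ⊢
    rw [cooc_maxCliques] at hC
    exact mem_maxCliques.mpr hC
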